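/- Assume R_c > 1 and let θ ∈ (0,1). Set E* = λ(R_c − 1)/((c + d)R_c). Then for every solution of the model there exists a sequence of times t_n with t_n → ∞ such that E(t_n) > θE* for all n ≥ 1. -/

import Mathlib

open Real Filter Set Topology

lemma comp_le {y : ℝ → ℝ} {K μ T : ℝ} (hμ : 0 < μ)
    (hy : ∀ t, T ≤ t → ∃ y', HasDerivAt y y' t ∧ y' ≤ μ * (K - y t)) :
    ∀ t, T ≤ t → y t ≤ K + (y T - K) * Real.exp (-μ * (t - T)) := by
  choose y' hderiv hle using hy
  set z : ℝ → ℝ := fun t => (y t - K) * Real.exp (μ * t) with hz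
  have hexpd : ∀ t : ℝ, HasDerivAt (fun s : ℝ => Real.exp (μ * s)) (Real.exp (μ * t) * μ) t := by
    intro t
    have := (((hasDerivAt_id t).const_mul μ).exp)
    simpa using this
  have hzderiv : ∀ t (ht : T ≤ t),
      HasDerivAt z (y' t ht * Real.exp (μ * t) + (y t - K) * (Real.exp (μ * t) * μ)) t := by
    intro t ht
    exact ((hderiv t ht).sub_const K).mul (hexpd t)
  have hanti : AntitoneOn z (Ici T) := by
    apply antitoneOn_of_deriv_nonpos (convex_Ici T)
    · intro t ht
      exact (hzderiv t ht).continuousAt.continuousWithinAt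
    · intro t ht
      rw [interior_Ici] at ht
      exact (hzderiv t (le_of_lt ht)).differentiableAt.differentiableWithinAt
    · intro t ht
      rw [interior_Ici] at ht
      rw [(hzderiv t (le_of_lt ht)).deriv]
      have h1 := hle t (le_of_lt ht)
      nlinarith [Real.exp_pos (μ * t)]
  intro t ht
  have hzle : (y t - K) * Real.exp (μ * t) ≤ (y T - K) * Real.exp (μ * T) :=
    hanti self_mem_Ici ht ht
  have h2 := mul_le_mul_of_nonneg_right hzle (Real.exp_pos (-(μ * t))).le
  rw [mul_assoc, mul_assoc, ← Real.exp_add, ← Real.exp_add] at h2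
  rw [show μ * t + -(μ * t) = 0 by ring, Real.exp_zero, mul_one,
    show μ * T + -(μ * t) = -μ * (t - T) by ring] at h2
  linarith

lemma eventually_le_of_comp {y : ℝ → ℝ} {K μ T ε : ℝ} (hμ : 0 < μ) (hε : 0 < ε)
    (h : ∀ t, T ≤ t → y t ≤ K + (y T - K) * Real.exp (-μ * (t - T))) :
    ∃ T', T ≤ T' ∧ ∀ t, T' ≤ t → y t ≤ K + ε := by
  have htend : Tendsto (fun t : ℝ => (y T - K) * Real.exp (-μ * (t - T))) atTop (𝓝 0) := by
    rw [show (0:ℝ) = (y T - K) * 0 by ring]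
    apply Tendsto.const_mul
    apply Real.tendsto_exp_atBot.comp
    have h1 : Tendsto (fun t : ℝ => t - T) atTop atTop :=
      tendsto_atTop_add_const_right _ (-T) tendsto_id
    exact h1.const_mul_atTop_of_neg (neg_neg_iff_pos.mpr hμ)
  have hev : ∀ᶠ t in (atTop : Filter ℝ), (y T - K) * Real.exp (-μ * (t - T)) ≤ ε := by
    filter_upwards [htend.eventually (ge_mem_nhds hε)] with t ht using ht
  obtain ⟨T'', hT''⟩ := hev.exists_forall_of_atTop
  exact ⟨max T T'', le_max_left _ _, fun t ht =>
    (h t ((le_max_left T T'').trans ht)).trans (by linarith [hT'' t ((le_max_right T T'').trans ht)])⟩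

lemma comp_ge {y : ℝ → ℝ} {K μ T : ℝ} (hμ : 0 < μ)
    (hy : ∀ t, T ≤ t → ∃ y', HasDerivAt y y' t ∧ μ * (K - y t) ≤ y') :
    ∀ t, T ≤ t → K + (y T - K) * Real.exp (-μ * (t - T)) ≤ y t := by
  have h := comp_le (y := fun t => -y t) (K := -K) (μ := μ) (T := T) hμ ?_
  · intro t ht
    have h2 := h t ht
    simp only [neg_sub_neg] at h2
    linarith [h2]
  · intro t ht
    obtain ⟨y', hd, hge⟩ := hy t ht
    refine ⟨-y', hd.neg, ?_⟩
    show -y' ≤ μ * (-K - -(y t))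
    nlinarith [hge]

lemma mono_from_deriv {y : ℝ → ℝ} {T : ℝ}
    (hy : ∀ t, T ≤ t → ∃ y', HasDerivAt y y' t ∧ 0 ≤ y') :
    MonotoneOn y (Ici T) := by
  choose y' hderiv hle using hy
  apply monotoneOn_of_deriv_nonneg (convex_Ici T)
  · intro t ht; exact (hderiv t ht).continuousAt.continuousWithinAt
  · intro t ht; rw [interior_Ici] at ht
    exact (hderiv t ht.le).differentiableAt.differentiableWithinAt
  · intro t ht; rw [interior_Ici] at ht
    rw [(hderiv t ht.le).deriv]; exact hle t ht.le

lemma reach_stay {y : ℝ → ℝ} {σ ρ T : ℝ} (hρ : 0 < ρ)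
    (hy : ∀ t, T ≤ t → ∃ y', HasDerivAt y y' t ∧ (y t ≤ σ → ρ ≤ y')) :
    ∃ T', T ≤ T' ∧ ∀ t, T' ≤ t → σ < y t := by
  choose y' hderiv himp using hy
  -- Step 1: reach
  have hreach : ∃ t₀, T ≤ t₀ ∧ σ < y t₀ := by
    by_contra hcon
    push_neg at hcon
    have hmono : MonotoneOn (fun t => y t - ρ * t) (Ici T) := by
      apply mono_from_deriv
      intro t ht
      refine ⟨y' t ht - ρ, (hderiv t ht).sub ((hasDerivAt_id t).const_mul ρ |>.congr_deriv (by ring)), ?_⟩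
      have := himp t ht (hcon t ht)
      linarith
    have hq : 0 < (σ + 1 - y T) / ρ := div_pos (by linarith [hcon T le_rfl]) hρ
    have hT₁ : T ≤ T + (σ + 1 - y T) / ρ := by linarith
    have hm := hmono self_mem_Ici (mem_Ici.mpr hT₁) hT₁
    simp only at hm
    have hρ' : ρ * ((σ + 1 - y T) / ρ) = σ + 1 - y T := by field_simp
    have hlast := hcon _ hT₁
    nlinarith [hm, hρ', hlast]
  obtain ⟨t₀, ht₀T, ht₀⟩ := hreach
  refine ⟨t₀, ht₀T, ?_⟩
  intro t ht
  by_contra hle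
  push_neg at hle
  have htlt : t₀ < t := by
    by_contra h
    push_neg at h
    have he : t = t₀ := le_antisymm h ht
    rw [he] at hle; linarith
  set Sset : Set ℝ := {s | s ∈ Icc t₀ t ∧ y s ≤ σ} with hSset
  have hyCont : ContinuousOn y (Icc t₀ t) := by
    intro s hs
    exact (hderiv s (ht₀T.trans hs.1)).continuousAt.continuousWithinAt
  have hclosed : IsClosed Sset := by
    have : Sset = Icc t₀ t ∩ y ⁻¹' (Iic σ) := by
      ext s; simp [hSset, and_comm]
    rw [this]
    exact hyCont.preimage_isClosed_of_isClosed isClosed_Icc isClosed_Iic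
  have hne : Sset.Nonempty := ⟨t, ⟨⟨htlt.le, le_rfl⟩, hle⟩⟩
  have hbdd : BddBelow Sset := ⟨t₀, fun s hs => hs.1.1⟩
  set s := sInf Sset with hs
  have hsmem : s ∈ Sset := hclosed.csInf_mem hne hbdd
  have hst₀ : t₀ < s := by
    by_contra h
    push_neg at h
    have he : s = t₀ := le_antisymm h hsmem.1.1
    have := hsmem.2
    rw [he] at this; linarith
  have hsT : T ≤ s := ht₀T.trans hsmem.1.1
  have hd := hderiv s hsT
  have hpos : 0 < y' s hsT := lt_of_lt_of_le hρ (himp s hsT hsmem.2)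
  have hslope := hasDerivAt_iff_tendsto_slope.mp hd
  have hev : ∀ᶠ x in 𝓝[<] s, 0 < slope y s x := by
    have : ∀ᶠ x in 𝓝[≠] s, 0 < slope y s x :=
      hslope.eventually (eventually_gt_nhds hpos)
    exact this.filter_mono (nhdsWithin_mono s fun x hx => ne_of_lt hx)
  have hev2 : ∀ᶠ x in 𝓝[<] s, x ∈ Ioo t₀ s :=
    Ioo_mem_nhdsLT_of_mem ⟨hst₀, le_rfl⟩
  obtain ⟨x, hx1, hx2⟩ := (hev.and hev2).exists
  have hxy : y x < y s := by
    have hxs : x - s < 0 := by linarith [hx2.2]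
    rw [slope_def_field] at hx1
    rcases div_pos_iff.mp hx1 with ⟨h1, h2⟩ | ⟨h1, h2⟩
    · linarith
    · linarith
  have : ¬ y x ≤ σ := by
    intro hyx
    have hxmem : x ∈ Sset := ⟨⟨hx2.1.le, hx2.2.le.trans hsmem.1.2⟩, hyx⟩
    exact absurd (csInf_le hbdd hxmem) (not_le.mpr hx2.2)
  exact this (hxy.le.trans hsmem.2)

set_option maxHeartbeats 2000000 in
theorem exists_times_E_exceeds_theta_Estar
    (lam β a b c d q1 q2 r1 r2 r3 p B1 B2 Rc Estar θ : ℝ)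
    (S E I A Q R N : ℝ → ℝ)
    (hlam : 0 < lam) (hβ : 0 < β) (ha : 0 < a) (hb : 0 < b) (hc : 0 < c)
    (hd : 0 < d) (hq1 : 0 < q1) (hq2 : 0 < q2) (hr1 : 0 < r1) (hr2 : 0 < r2)
    (hr3 : 0 < r3) (hp : 0 < p) (hp1 : p < 1)
    (hB1 : B1 = q1 + r1 + d) (hB2 : B2 = q2 + r2 + d)
    (hRc : Rc = a * β / (c + d) + p * c * β / ((c + d) * B1)
      + b * β * c * (1 - p) / ((c + d) * B2))
    (hRc1 : 1 < Rc)
    (hθ0 : 0 < θ) (hθ1 : θ < 1)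
    (hEstar : Estar = lam * (Rc - 1) / ((c + d) * Rc))
    (hN : ∀ t, N t = S t + E t + I t + A t + Q t + R t)
    (hS' : ∀ t, 0 ≤ t →
      HasDerivAt S (lam - β * S t * (a * E t + I t + b * A t) / N t - d * S t) t)
    (hE' : ∀ t, 0 ≤ t →
      HasDerivAt E (β * S t * (a * E t + I t + b * A t) / N t - (c + d) * E t) t)
    (hI' : ∀ t, 0 ≤ t → HasDerivAt I (p * c * E t - B1 * I t) t)
    (hA' : ∀ t, 0 ≤ t → HasDerivAt A ((1 - p) * c * E t - B2 * A t) t)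
    (hQ' : ∀ t, 0 ≤ t → HasDerivAt Q (q1 * I t + q2 * A t - (r3 + d) * Q t) t)
    (hR' : ∀ t, 0 ≤ t → HasDerivAt R (r1 * I t + r2 * A t + r3 * Q t - d * R t) t)
    (hnonneg : ∀ t, 0 ≤ t →
      0 ≤ S t ∧ 0 ≤ E t ∧ 0 ≤ I t ∧ 0 ≤ A t ∧ 0 ≤ Q t ∧ 0 ≤ R t)
    (hE0 : 0 < E 0)
    (hNpos : ∀ t, 0 ≤ t → 0 < N t) :
    ∃ tseq : ℕ → ℝ, Filter.Tendsto tseq Filter.atTop Filter.atTop ∧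
      ∀ n : ℕ, 1 ≤ n → θ * Estar < E (tseq n) := by
  -- basic positivity
  have hcd : 0 < c + d := by linarith
  have hcd0 : c + d ≠ 0 := ne_of_gt hcd
  have hB1p : 0 < B1 := by rw [hB1]; linarith
  have hB2p : 0 < B2 := by rw [hB2]; linarith
  have hB10 : B1 ≠ 0 := ne_of_gt hB1p
  have hB20 : B2 ≠ 0 := ne_of_gt hB2p
  have hβ0 : β ≠ 0 := ne_of_gt hβ
  have hRcpos : 0 < Rc := by linarith
  have hRc0 : Rc ≠ 0 := ne_of_gt hRcpos
  have hEstarpos : 0 < Estar := by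
    rw [hEstar]; apply div_pos (by nlinarith) (by positivity)
  have hθE : 0 < θ * Estar := mul_pos hθ0 hEstarpos
  -- reduce to frequent exceedance
  suffices H : ∀ T : ℝ, ∃ t, T ≤ t ∧ θ * Estar < E t by
    choose f hf1 hf2 using H
    refine ⟨fun n => f n, ?_, fun n _ => hf2 n⟩
    exact tendsto_atTop_mono (fun n => hf1 (n : ℝ)) tendsto_natCast_atTop_atTop
  by_contra hcon
  push_neg at hcon
  obtain ⟨T₀, hT₀⟩ := hcon
  set T := max T₀ 0 with hTdef
  have hT0 : (0:ℝ) ≤ T := le_max_right _ _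
  have hT : ∀ t, T ≤ t → E t ≤ θ * Estar :=
    fun t ht => hT₀ t ((le_max_left _ _).trans ht)
  clear_value T
  -- nonnegativity shorthands
  have hSnn : ∀ t, 0 ≤ t → 0 ≤ S t := fun t ht => (hnonneg t ht).1
  have hEnn : ∀ t, 0 ≤ t → 0 ≤ E t := fun t ht => (hnonneg t ht).2.1
  have hInn : ∀ t, 0 ≤ t → 0 ≤ I t := fun t ht => (hnonneg t ht).2.2.1
  have hAnn : ∀ t, 0 ≤ t → 0 ≤ A t := fun t ht => (hnonneg t ht).2.2.2.1
  have hfnn : ∀ t, 0 ≤ t → 0 ≤ a * E t + I t + b * A t := by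
    intro t ht
    have h1 := hEnn t ht; have h2 := hInn t ht; have h3 := hAnn t ht
    nlinarith
  have hflux : ∀ t, 0 ≤ t → 0 ≤ β * S t * (a * E t + I t + b * A t) / N t := by
    intro t ht
    apply div_nonneg _ (hNpos t ht).le
    have := hSnn t ht; have := hfnn t ht
    positivity
  -- lower bound for E
  have Elow : ∀ s, 0 ≤ s → ∀ t, s ≤ t →
      E s * Real.exp (-(c + d) * (t - s)) ≤ E t := by
    intro s hs
    have hcomp := comp_ge (y := E) (K := 0) (μ := c + d) (T := s) hcd ?_
    · intro t ht
      have h2 := hcomp t ht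
      simpa using h2
    · intro t ht
      have ht0 : (0:ℝ) ≤ t := hs.trans ht
      refine ⟨_, hE' t ht0, ?_⟩
      have := hflux t ht0
      nlinarith
  have Epos : ∀ t, 0 ≤ t → 0 < E t := by
    intro t ht
    have := Elow 0 le_rfl t ht
    have he := Real.exp_pos (-(c + d) * (t - 0))
    nlinarith
  -- derivative of N and upper bound for N
  have hN' : ∀ t, 0 ≤ t → HasDerivAt N (lam - d * N t) t := by
    intro t ht
    have h := ((((((hS' t ht).add (hE' t ht)).add (hI' t ht)).add
      (hA' t ht)).add (hQ' t ht)).add (hR' t ht))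
    have hfun : (fun u => S u + E u + I u + A u + Q u + R u) = N :=
      funext fun u => (hN u).symm
    change HasDerivAt (fun u => S u + E u + I u + A u + Q u + R u) _ t at h; rw [hfun] at h
    convert h using 1
    rw [hN t, hB1, hB2]
    ring
  set Nmax := lam / d + |N 0 - lam / d| with hNmaxdef
  clear_value Nmax
  have hNmaxpos : 0 < Nmax := by
    rw [hNmaxdef]
    have := abs_nonneg (N 0 - lam / d)
    have : 0 < lam / d := div_pos hlam hd
    positivity
  have hNub : ∀ t, 0 ≤ t → N t ≤ Nmax := by
    have hcomp := comp_le (y := N) (K := lam / d) (μ := d) (T := 0) hd ?_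
    · intro t ht
      have h2 := hcomp t ht
      have he1 : Real.exp (-d * (t - 0)) ≤ 1 := by
        rw [Real.exp_le_one_iff]
        nlinarith
      have hepos := Real.exp_pos (-d * (t - 0))
      have hh1 := mul_le_mul_of_nonneg_right (le_abs_self (N 0 - lam / d)) hepos.le
      have hh2 := mul_le_mul_of_nonneg_left he1 (abs_nonneg (N 0 - lam / d))
      rw [hNmaxdef]
      nlinarith
    · intro t ht
      refine ⟨_, hN' t ht, ?_⟩
      have : d * (lam / d - N t) = lam - d * N t := by field_simp
      linarith [this.ge]
  have hSleN : ∀ t, 0 ≤ t → S t ≤ N t := by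
    intro t ht
    obtain ⟨h1, h2, h3, h4, h5, h6⟩ := hnonneg t ht
    rw [hN t]; linarith
  have hEleN : ∀ t, 0 ≤ t → E t ≤ N t := by
    intro t ht
    obtain ⟨h1, h2, h3, h4, h5, h6⟩ := hnonneg t ht
    rw [hN t]; linarith
  have hIleN : ∀ t, 0 ≤ t → I t ≤ N t := by
    intro t ht
    obtain ⟨h1, h2, h3, h4, h5, h6⟩ := hnonneg t ht
    rw [hN t]; linarith
  have hAleN : ∀ t, 0 ≤ t → A t ≤ N t := by
    intro t ht
    obtain ⟨h1, h2, h3, h4, h5, h6⟩ := hnonneg t ht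
    rw [hN t]; linarith
  -- constants
  set lR := lam * (Rc - 1) with hlRdef
  clear_value lR
  have hlRpos : 0 < lR := by rw [hlRdef]; nlinarith
  set θ' := (θ + 1) / 2 with hθ'def
  clear_value θ'
  have hθ'1 : θ' < 1 := by rw [hθ'def]; linarith
  have hθθ' : θ < θ' := by rw [hθ'def]; linarith
  have hθ'0 : 0 < θ' := by rw [hθ'def]; linarith
  set ε₀ := (θ' - θ) * lR / (β * (1 + b)) with hε₀def
  clear_value ε₀
  have hε₀pos : 0 < ε₀ := by
    rw [hε₀def]; apply div_pos (by nlinarith) (by positivity)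
  set F := θ' * lR / β with hFdef
  clear_value F
  have hFpos : 0 < F := by rw [hFdef]; positivity
  -- eventual upper bound for I
  have hIcomp := comp_le (y := I) (K := p * c * (θ * Estar) / B1) (μ := B1) (T := T) hB1p ?_
  rotate_left
  · intro t ht
    have ht0 : (0:ℝ) ≤ t := hT0.trans ht
    refine ⟨_, hI' t ht0, ?_⟩
    have hBK : B1 * (p * c * (θ * Estar) / B1) = p * c * (θ * Estar) := by field_simp
    have hEt := hT t ht
    nlinarith [mul_pos hp hc]
  obtain ⟨T₁, hTT₁, hIub⟩ := eventually_le_of_comp hB1p hε₀pos hIcomp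
  -- eventual upper bound for A
  have hAcomp := comp_le (y := A) (K := (1 - p) * c * (θ * Estar) / B2) (μ := B2) (T := T) hB2p ?_
  rotate_left
  · intro t ht
    have ht0 : (0:ℝ) ≤ t := hT0.trans ht
    refine ⟨_, hA' t ht0, ?_⟩
    have hBK : B2 * ((1 - p) * c * (θ * Estar) / B2) = (1 - p) * c * (θ * Estar) := by
      field_simp
    have hEt := hT t ht
    nlinarith [mul_pos (by linarith : (0:ℝ) < 1 - p) hc]
  obtain ⟨T₁', hTT₁', hAub⟩ := eventually_le_of_comp hB2p hε₀pos hAcomp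
  set T₂ := max T₁ T₁' with hT₂def
  clear_value T₂
  have hT₁T₂ : T₁ ≤ T₂ := by rw [hT₂def]; exact le_max_left _ _
  have hT₁'T₂ : T₁' ≤ T₂ := by rw [hT₂def]; exact le_max_right _ _
  have hTT₂ : T ≤ T₂ := hTT₁.trans hT₁T₂
  have hT₂0 : (0:ℝ) ≤ T₂ := hT0.trans hTT₂
  -- core algebraic identity
  have hcore : a + p * c / B1 + b * ((1 - p) * c) / B2 = (c + d) * Rc / β := by
    rw [hRc]; field_simp
  have hEstarmul : θ * Estar * ((c + d) * Rc / β) = θ * lR / β := by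
    rw [hEstar, hlRdef]; field_simp
  -- eventual bound on the force of infection
  have hfF : ∀ t, T₂ ≤ t → a * E t + I t + b * A t ≤ F := by
    intro t ht
    have h1 := hT t (hTT₂.trans ht)
    have h2 := hIub t (hT₁T₂.trans ht)
    have h3 := hAub t (hT₁'T₂.trans ht)
    have e1 : a * (θ * Estar) + p * c * (θ * Estar) / B1
        + b * ((1 - p) * c * (θ * Estar) / B2) = θ * Estar * ((c + d) * Rc / β) := by
      rw [← hcore]; ring
    have e3 : (1 + b) * ε₀ = (θ' - θ) * lR / β := by
      rw [hε₀def]; field_simp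
    have e4 : θ * lR / β + (θ' - θ) * lR / β = θ' * lR / β := by ring
    have m1 : a * E t ≤ a * (θ * Estar) := mul_le_mul_of_nonneg_left h1 ha.le
    have m3 : b * A t ≤ b * ((1 - p) * c * (θ * Estar) / B2 + ε₀) :=
      mul_le_mul_of_nonneg_left h3 hb.le
    rw [hFdef]
    linarith
  -- the susceptible fraction eventually exceeds sig
  set xs := lam / (lam + β * F) with hxsdef
  clear_value xs
  have hden : 0 < lam + β * F := by positivity
  have hden0 : lam + β * F ≠ 0 := ne_of_gt hden
  have hβF : β * F = θ' * lR := by rw [hFdef]; field_simp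
  have hxsRc : 1 / Rc < xs := by
    rw [hxsdef, div_lt_div_iff₀ hRcpos hden]
    have hm := mul_lt_mul_of_pos_right hθ'1 hlRpos
    have hlam2 : lam * Rc = lam + lR := by rw [hlRdef]; ring
    linarith [hβF]
  set sig := (xs + 1 / Rc) / 2 with hsigdef
  clear_value sig
  have hsig1 : 1 / Rc < sig := by rw [hsigdef]; linarith
  have hsig2 : sig < xs := by rw [hsigdef]; linarith
  have hsigpos : 0 < sig := lt_trans (by positivity) hsig1
  have hsigRc : 1 < sig * Rc := (div_lt_iff₀ hRcpos).mp hsig1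
  set ρ := ((lam + β * F) / Nmax) * (xs - sig) with hρdef
  clear_value ρ
  have hρpos : 0 < ρ := by
    rw [hρdef]
    exact mul_pos (div_pos hden hNmaxpos) (by linarith)
  have hxseq : xs * (lam + β * F) = lam := by rw [hxsdef]; field_simp
  have hreach := reach_stay (y := fun t => S t / N t) (σ := sig) (ρ := ρ) (T := T₂) hρpos ?_
  rotate_left
  · intro t ht
    have ht0 : (0:ℝ) ≤ t := hT₂0.trans ht
    have hNt := hNpos t ht0
    have hNt0 : N t ≠ 0 := ne_of_gt hNt
    refine ⟨_, (hS' t ht0).div (hN' t ht0) hNt0, ?_⟩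
    intro hxle
    change S t / N t ≤ sig at hxle
    have hf := hfF t ht
    have hfn := hfnn t ht0
    have hSn := hSnn t ht0
    have hNub' := hNub t ht0
    have hSle : S t ≤ sig * N t := by
      rw [div_le_iff₀ hNt] at hxle; linarith
    rw [le_div_iff₀ (by positivity : (0:ℝ) < N t ^ 2)]
    have hnum : (lam - β * S t * (a * E t + I t + b * A t) / N t - d * S t) * N t
        - S t * (lam - d * N t)
        = lam * (N t - S t) - β * S t * (a * E t + I t + b * A t) := by
      field_simp
      ring
    rw [hnum]
    have c1 : β * S t * (a * E t + I t + b * A t) ≤ β * S t * F :=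
      mul_le_mul_of_nonneg_left hf (by positivity)
    have c2 : lam * (N t - S t) - β * S t * F = (lam + β * F) * (xs * N t - S t) := by
      linear_combination (-(N t)) * hxseq
    have c3 : (xs - sig) * N t ≤ xs * N t - S t := by linarith
    have c4 : (lam + β * F) * ((xs - sig) * N t) ≤ (lam + β * F) * (xs * N t - S t) :=
      mul_le_mul_of_nonneg_left c3 hden.le
    have hρN : ρ * Nmax = (lam + β * F) * (xs - sig) := by
      rw [hρdef]; field_simp
    have hρN2 : ρ * Nmax * N t = (lam + β * F) * ((xs - sig) * N t) := by
      linear_combination (N t) * hρN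
    have c5 : ρ * N t ^ 2 ≤ (lam + β * F) * ((xs - sig) * N t) := by
      have h1 : ρ * N t ≤ ρ * Nmax := mul_le_mul_of_nonneg_left hNub' hρpos.le
      have h2 : ρ * N t * N t ≤ ρ * Nmax * N t := mul_le_mul_of_nonneg_right h1 hNt.le
      calc ρ * N t ^ 2 = ρ * N t * N t := by ring
        _ ≤ ρ * Nmax * N t := h2
        _ = (lam + β * F) * ((xs - sig) * N t) := hρN2
    linarith
  obtain ⟨T₃, hT₂T₃, hsiglt⟩ := hreach
  have hT₃0 : (0:ℝ) ≤ T₃ := hT₂0.trans hT₂T₃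
  -- Lyapunov function
  set α := sig * β / B1 with hαdef
  clear_value α
  have hαpos : 0 < α := by rw [hαdef]; positivity
  set γ := sig * b * β / B2 with hγdef
  clear_value γ
  have hγpos : 0 < γ := by rw [hγdef]; positivity
  set δ := (c + d) * (sig * Rc - 1) with hδdef
  clear_value δ
  have hδpos : 0 < δ := by rw [hδdef]; exact mul_pos hcd (by linarith)
  set V : ℝ → ℝ := fun t => E t + α * I t + γ * A t with hVdef
  clear_value V
  have hαB1 : α * B1 = sig * β := by rw [hαdef]; field_simp
  have hγB2 : γ * B2 = sig * b * β := by rw [hγdef]; field_simp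
  have hEcoef : sig * (a * β) + α * (p * c) + γ * ((1 - p) * c) = sig * ((c + d) * Rc) := by
    rw [hαdef, hγdef, hRc]; field_simp
  have hV' : ∀ t, T₃ ≤ t → ∃ v', HasDerivAt V v' t ∧ δ * E t ≤ v' := by
    intro t ht
    rw [hVdef]
    have ht0 : (0:ℝ) ≤ t := hT₃0.trans ht
    have hd1 := hE' t ht0
    have hd2 := (hI' t ht0).const_mul α
    have hd3 := (hA' t ht0).const_mul γ
    refine ⟨_, (hd1.add hd2).add hd3, ?_⟩
    have hsx := hsiglt t ht
    change sig < S t / N t at hsx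
    have hfn := hfnn t ht0
    have hflow : sig * β * (a * E t + I t + b * A t)
        ≤ β * S t * (a * E t + I t + b * A t) / N t := by
      have h1 : sig * (β * (a * E t + I t + b * A t))
          ≤ (S t / N t) * (β * (a * E t + I t + b * A t)) :=
        mul_le_mul_of_nonneg_right hsx.le (by positivity)
      have h2 : (S t / N t) * (β * (a * E t + I t + b * A t))
          = β * S t * (a * E t + I t + b * A t) / N t := by ring
      linarith [h2.le, h2.ge]
    have hkey : sig * β * (a * E t + I t + b * A t) - (c + d) * E t
        + α * (p * c * E t - B1 * I t) + γ * ((1 - p) * c * E t - B2 * A t)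
        = δ * E t := by
      linear_combination (E t) * hEcoef - (I t) * hαB1 - (A t) * hγB2 - (E t) * hδdef
    linarith [hflow, hkey.le, hkey.ge]
  choose v' hv'd hv'ge using hV'
  have hVmono : MonotoneOn V (Ici T₃) := by
    apply mono_from_deriv
    intro t ht
    exact ⟨v' t ht, hv'd t ht,
      le_trans (mul_nonneg hδpos.le (hEnn t (hT₃0.trans ht))) (hv'ge t ht)⟩
  have hV0pos : 0 < V T₃ := by
    have h1 := Epos T₃ hT₃0
    have h2 := mul_nonneg hαpos.le (hInn T₃ hT₃0)
    have h3 := mul_nonneg hγpos.le (hAnn T₃ hT₃0)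
    simp only [hVdef]
    linarith
  have hVub : ∀ t, 0 ≤ t → V t ≤ (1 + α + γ) * Nmax := by
    intro t ht
    simp only [hVdef]
    have h1 := (hEleN t ht).trans (hNub t ht)
    have h2 := mul_le_mul_of_nonneg_left ((hIleN t ht).trans (hNub t ht)) hαpos.le
    have h3 := mul_le_mul_of_nonneg_left ((hAleN t ht).trans (hNub t ht)) hγpos.le
    have hexp : (1 + α + γ) * Nmax = Nmax + α * Nmax + γ * Nmax := by ring
    linarith [hexp.le, hexp.ge]
  have hVne : (V '' Ici T₃).Nonempty := ⟨V T₃, mem_image_of_mem V self_mem_Ici⟩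
  have hVbdd : BddAbove (V '' Ici T₃) := by
    refine ⟨(1 + α + γ) * Nmax, ?_⟩
    rintro v ⟨t, ht, rfl⟩
    exact hVub t (hT₃0.trans ht)
  set L := sSup (V '' Ici T₃) with hLdef
  clear_value L
  have hVleL : ∀ t, T₃ ≤ t → V t ≤ L := by
    intro t ht
    rw [hLdef]
    exact le_csSup hVbdd (mem_image_of_mem V ht)
  -- E is eventually small
  set c₁ := 1 + α * (p * c) / B1 + γ * ((1 - p) * c) / B2 with hc₁def
  clear_value c₁
  have hc₁pos : 0 < c₁ := by
    rw [hc₁def]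
    have h1 : 0 ≤ α * (p * c) / B1 :=
      div_nonneg (mul_nonneg hαpos.le (mul_pos hp hc).le) hB1p.le
    have h2 : 0 ≤ γ * ((1 - p) * c) / B2 :=
      div_nonneg (mul_nonneg hγpos.le (mul_pos (by linarith : (0:ℝ) < 1 - p) hc).le) hB2p.le
    linarith
  set εE := V T₃ / (4 * c₁) with hεEdef
  clear_value εE
  have hεEpos : 0 < εE := by
    rw [hεEdef]; exact div_pos hV0pos (by positivity)
  set η := δ * Real.exp (-(c + d)) * εE with hηdef
  clear_value η
  have hηpos : 0 < η := by
    rw [hηdef]; exact mul_pos (mul_pos hδpos (Real.exp_pos _)) hεEpos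
  obtain ⟨v, hvmem, hvgt⟩ := exists_lt_of_lt_csSup hVne
    (show L - η < sSup (V '' Ici T₃) by rw [← hLdef]; linarith)
  obtain ⟨t₄, ht₄mem, rfl⟩ := hvmem
  have ht₄ : T₃ ≤ t₄ := ht₄mem
  have ht₄0 : (0:ℝ) ≤ t₄ := hT₃0.trans ht₄
  have hEsmall : ∀ t, t₄ ≤ t → E t ≤ εE := by
    intro t ht
    by_contra hEc
    push_neg at hEc
    have htT₃ : T₃ ≤ t := ht₄.trans ht
    have ht0 : (0:ℝ) ≤ t := ht₄0.trans ht
    set w : ℝ → ℝ := fun s => if h : T₃ ≤ s then v' s h else 0 with hwdef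
    obtain ⟨ξ, hξ, hslope⟩ := exists_hasDerivAt_eq_slope V w
      (show t < t + 1 by linarith)
      (fun s hs => (hv'd s (htT₃.trans hs.1)).continuousAt.continuousWithinAt)
      (by
        intro s hs
        have hsT₃ : T₃ ≤ s := htT₃.trans hs.1.le
        have hws : w s = v' s hsT₃ := dif_pos hsT₃
        rw [hws]
        exact hv'd s hsT₃)
    have hξT₃ : T₃ ≤ ξ := htT₃.trans hξ.1.le
    have hwξ : w ξ = v' ξ hξT₃ := dif_pos hξT₃
    rw [hwξ] at hslope
    have hone : t + 1 - t = (1:ℝ) := by ring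
    rw [hone, div_one] at hslope
    have hEξ : εE * Real.exp (-(c + d)) ≤ E ξ := by
      have h1 := Elow t ht0 ξ hξ.1.le
      have h2 : Real.exp (-(c + d)) ≤ Real.exp (-(c + d) * (ξ - t)) := by
        apply Real.exp_le_exp.mpr
        have hm := mul_le_mul_of_nonneg_left (by linarith [hξ.1, hξ.2] : ξ - t ≤ 1) hcd.le
        have hm2 : (c + d) * (ξ - t) ≤ c + d := by linarith [hm]
        linarith [hm2]
      have h3 : εE * Real.exp (-(c + d) * (ξ - t)) ≤ E t * Real.exp (-(c + d) * (ξ - t)) :=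
        mul_le_mul_of_nonneg_right hEc.le (Real.exp_pos _).le
      have h4 : εE * Real.exp (-(c + d)) ≤ εE * Real.exp (-(c + d) * (ξ - t)) :=
        mul_le_mul_of_nonneg_left h2 hεEpos.le
      linarith
    have hVstep : η ≤ V (t + 1) - V t := by
      have h5 := hv'ge ξ hξT₃
      have h6 : δ * (εE * Real.exp (-(c + d))) ≤ δ * E ξ :=
        mul_le_mul_of_nonneg_left hEξ hδpos.le
      have h7 : η = δ * (εE * Real.exp (-(c + d))) := by rw [hηdef]; ring
      linarith [hslope.le, hslope.ge]
    have hVt₄t : V t₄ ≤ V t := hVmono ht₄mem (mem_Ici.mpr htT₃) ht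
    have hVle := hVleL (t + 1) (by linarith)
    linarith
  -- I and A eventually small
  set ε₂ := V T₃ / (4 * (α + γ)) with hε₂def
  clear_value ε₂
  have hε₂pos : 0 < ε₂ := by
    rw [hε₂def]; exact div_pos hV0pos (by positivity)
  have hIcomp2 := comp_le (y := I) (K := p * c * εE / B1) (μ := B1) (T := t₄) hB1p ?_
  rotate_left
  · intro t ht
    have ht0 : (0:ℝ) ≤ t := ht₄0.trans ht
    refine ⟨_, hI' t ht0, ?_⟩
    have hBK : B1 * (p * c * εE / B1) = p * c * εE := by field_simp
    have hEt : p * c * E t ≤ p * c * εE :=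
      mul_le_mul_of_nonneg_left (hEsmall t ht) (mul_pos hp hc).le
    linarith [hBK.le, hBK.ge]
  obtain ⟨T₅, hT₅, hIub2⟩ := eventually_le_of_comp hB1p hε₂pos hIcomp2
  have hAcomp2 := comp_le (y := A) (K := (1 - p) * c * εE / B2) (μ := B2) (T := t₄) hB2p ?_
  rotate_left
  · intro t ht
    have ht0 : (0:ℝ) ≤ t := ht₄0.trans ht
    refine ⟨_, hA' t ht0, ?_⟩
    have hBK : B2 * ((1 - p) * c * εE / B2) = (1 - p) * c * εE := by field_simp
    have hEt : (1 - p) * c * E t ≤ (1 - p) * c * εE :=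
      mul_le_mul_of_nonneg_left (hEsmall t ht)
        (mul_pos (by linarith : (0:ℝ) < 1 - p) hc).le
    linarith [hBK.le, hBK.ge]
  obtain ⟨T₅', hT₅', hAub2⟩ := eventually_le_of_comp hB2p hε₂pos hAcomp2
  -- final contradiction
  set t₆ := max T₅ T₅' with ht₆def
  clear_value t₆
  have hT₅t₆ : T₅ ≤ t₆ := by rw [ht₆def]; exact le_max_left _ _
  have hT₅'t₆ : T₅' ≤ t₆ := by rw [ht₆def]; exact le_max_right _ _
  have ht₄t₆ : t₄ ≤ t₆ := hT₅.trans hT₅t₆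
  have hT₃t₆ : T₃ ≤ t₆ := ht₄.trans ht₄t₆
  have hIt₆ := hIub2 t₆ hT₅t₆
  have hAt₆ := hAub2 t₆ hT₅'t₆
  have hEt₆ := hEsmall t₆ ht₄t₆
  have hVt₆ : V T₃ ≤ V t₆ := hVmono self_mem_Ici (mem_Ici.mpr hT₃t₆) hT₃t₆
  have hVupper : V t₆ ≤ c₁ * εE + (α + γ) * ε₂ := by
    simp only [hVdef]
    have m1 : α * I t₆ ≤ α * (p * c * εE / B1 + ε₂) :=
      mul_le_mul_of_nonneg_left hIt₆ hαpos.le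
    have m2 : γ * A t₆ ≤ γ * ((1 - p) * c * εE / B2 + ε₂) :=
      mul_le_mul_of_nonneg_left hAt₆ hγpos.le
    calc E t₆ + α * I t₆ + γ * A t₆
        ≤ εE + α * (p * c * εE / B1 + ε₂) + γ * ((1 - p) * c * εE / B2 + ε₂) := by
          linarith [hEt₆, m1, m2]
      _ = (1 + α * (p * c) / B1 + γ * ((1 - p) * c) / B2) * εE + (α + γ) * ε₂ := by
          field_simp
          ring
      _ = c₁ * εE + (α + γ) * ε₂ := by rw [hc₁def]
  have e1 : c₁ * εE = V T₃ / 4 := by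
    rw [hεEdef]; field_simp [ne_of_gt hc₁pos]
  have e2 : (α + γ) * ε₂ = V T₃ / 4 := by
    rw [hε₂def]; field_simp [ne_of_gt (by positivity : (0:ℝ) < α + γ)]
  have hfinal : V T₃ ≤ V T₃ / 4 + V T₃ / 4 := by
    calc V T₃ ≤ V t₆ := hVt₆
      _ ≤ c₁ * εE + (α + γ) * ε₂ := hVupper
      _ = V T₃ / 4 + V T₃ / 4 := by rw [e1, e2]
  linarith [hfinal, hV0pos]
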